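/- Consider an abstract evolution system of the form B(η) ∂_t (η, φ⃗) = δE(η, φ⃗), where B(η) is the skew-symmetric block operator with zero diagonal blocks, top-right block −l(H)^T, and bottom-left block l(H). Assume: (i) the map φ ↦ φ⃗ = S(η)φ is linear and satisfies l(H)·S(η)φ = φ; (ii) δ_{φ⃗}E(η, S(η)φ) = ρ (L_0 S(η)φ) l(H); (iii) the Hamiltonian H^IK(η,φ) = (1/ρ) E(η, S(η)φ) has variational derivatives δ_φ H^IK = L_0 S(η)φ and δ_η H^IK = (1/ρ) δ_η E(η, S(η)φ) − (l'(H)·S(η)φ) L_0 S(η)φ, where l(H)·D_η S(η)[η̇]φ + (l'(H)·S(η)φ) η̇ = 0. Then (η, φ⃗) with φ⃗ = S(η)φ solves the system B(η) ∂_t(η, φ⃗) = δE if and only if (η, φ) with φ = l(H)·φ⃗ solves Hamilton's canonical equations ∂_t η = δ_φ H^IK, ∂_t φ = −δ_η H^IK. -/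
import Mathlib


open scoped BigOperators

/-- Abstract Hamiltonian structure of the Isobe–Kakinuma model (pointwise in time).
Fields live in a commutative ℝ-algebra `F`. Given the tuple `l(H)` (with `l_0 = H^{p_0} = 1`)
and `l'(H)`, a linear solution map `S(η)` with `l(H)·S(η)φ = φ`, the variational derivatives
`δ_{φ⃗}E(η, S(η)φ) = ρ (L_0 S(η)φ) l(H)`, `δ_φ H^IK = L_0 S(η)φ`,
`δ_η H^IK = (1/ρ) δ_η E − (l'(H)·S(η)φ) L_0 S(η)φ`, and the chain rule
`∂_t φ = l(H)·∂_t φ⃗ + (l'(H)·φ⃗) ∂_t η` (which encodes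
`l(H)·D_η S(η)[η̇]φ + (l'(H)·S(η)φ) η̇ = 0`), the tuple `(η, φ⃗)` with `φ⃗ = S(η)φ`
solves the block system `[0, −l^T; l, 0] ∂_t(η, φ⃗) = (1/ρ)(δ_η E, δ_{φ⃗} E)` if and only if
`(η, φ)` solves Hamilton's canonical equations `∂_t η = δ_φ H^IK`, `∂_t φ = −δ_η H^IK`. -/
theorem stmt8 {N : ℕ} (F : Type*) [CommRing F] [Algebra ℝ F]
    (ρ : ℝ) (hρ : 0 < ρ)
    (l l' : Fin (N + 1) → F) (hl0 : l 0 = 1)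
    (S : F →ₗ[ℝ] (Fin (N + 1) → F))
    (hS : ∀ ψ : F, ∑ i, l i * S ψ i = ψ)
    (φ : F)
    (L0Sφ : F)                     -- the field `L_0(H,b) S(η)φ`
    (deltaEφ : Fin (N + 1) → F)    -- `δ_{φ⃗} E(η, S(η)φ)`
    (deltaEη : F)                  -- `δ_η E(η, S(η)φ)`
    (deltaHφ deltaHη : F)          -- variational derivatives of `H^IK`
    (hii : ∀ i, deltaEφ i = ρ • (L0Sφ * l i))
    (hiii₁ : deltaHφ = L0Sφ)
    (hiii₂ : deltaHη = ρ⁻¹ • deltaEη - (∑ i, l' i * S φ i) * L0Sφ)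
    (ηdot φdot : F) (φvecdot : Fin (N + 1) → F)
    (hchain : φdot = ∑ i, l i * φvecdot i + (∑ i, l' i * S φ i) * ηdot) :
    ((∀ i, l i * ηdot = ρ⁻¹ • deltaEφ i) ∧
        -(∑ i, l i * φvecdot i) = ρ⁻¹ • deltaEη)
      ↔ (ηdot = deltaHφ ∧ φdot = -deltaHη) := by
  have hinv : ∀ x : F, ρ⁻¹ • (ρ • x) = x := fun x => by
    rw [smul_smul, inv_mul_cancel₀ hρ.ne', one_smul]
  constructor
  · rintro ⟨h1, h2⟩
    have hη : ηdot = L0Sφ := by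
      have h := h1 0
      rw [hii, hinv, hl0, one_mul, mul_one] at h
      exact h
    refine ⟨hη ▸ hiii₁.symm, ?_⟩
    have hsum : ∑ i, l i * φvecdot i = -(ρ⁻¹ • deltaEη) := by
      rw [← h2, neg_neg]
    rw [hchain, hiii₂, hη, hsum]
    ring_nf
  · rintro ⟨h1, h2⟩
    have hη : ηdot = L0Sφ := h1.trans hiii₁
    constructor
    · intro i
      rw [hii, hinv, hη]; ring
    · have hc := hchain
      rw [h2, hiii₂, hη] at hc
      linear_combination hc
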